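/- Let Ω ⊂ ℝ² be either an open ball {x : |x| < R} (R > 0) or an open annulus {x : a < |x| < b} (0 < a < b) centered at the origin, let κ > 0 and set Ω_κ = T_κ^{-1}(Ω). Let ψ : ℝ² → ℝ be radial and continuously differentiable on Ω_κ \ {0}, and set φ = ψ ∘ T_κ^{-1}. Then, as an identity of Lebesgue integrals with values in [0, ∞]: κ ∫_Ω |∇φ(x)|² dx = ∫_{Ω_κ} |∇ψ(y)|² dy. -/

import Mathlib

open MeasureTheory

noncomputable abbrev E2 : Type := EuclideanSpace ℝ (Fin 2)

/-- The transformation T_κ y = |y|^{κ-1} y (with T_κ 0 = 0). -/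
noncomputable def Tk (κ : ℝ) (y : E2) : E2 := ‖y‖ ^ (κ - 1) • y

lemma norm_Tk {κ : ℝ} (hκ : 0 < κ) (y : E2) : ‖Tk κ y‖ = ‖y‖ ^ κ := by
  rcases eq_or_ne y 0 with rfl | hy
  · simp [Tk, Real.zero_rpow hκ.ne']
  · have hy' : (0:ℝ) < ‖y‖ := norm_pos_iff.mpr hy
    rw [Tk, norm_smul, Real.norm_eq_abs, abs_of_nonneg (Real.rpow_nonneg (norm_nonneg y) _)]
    rw [← Real.rpow_add_one hy'.ne' (κ - 1)]
    norm_num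

lemma Tk_Tk {κ : ℝ} (hκ : 0 < κ) (y : E2) : Tk (1/κ) (Tk κ y) = y := by
  rcases eq_or_ne y 0 with rfl | hy
  · simp [Tk]
  · have hy' : (0:ℝ) < ‖y‖ := norm_pos_iff.mpr hy
    show ‖Tk κ y‖ ^ (1/κ - 1) • Tk κ y = y
    rw [norm_Tk hκ, Tk, smul_smul, ← Real.rpow_mul (norm_nonneg y), ← Real.rpow_add hy']
    rw [show κ * (1/κ - 1) + (κ - 1) = 0 by field_simp; ring, Real.rpow_zero, one_smul]

lemma Tk_Tk' {κ : ℝ} (hκ : 0 < κ) (x : E2) : Tk κ (Tk (1/κ) x) = x := by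
  have h := Tk_Tk (show (0:ℝ) < 1/κ by positivity) x
  rwa [one_div_one_div] at h

lemma hasFDerivAt_normE2 {x : E2} (hx : x ≠ 0) :
    HasFDerivAt (fun y : E2 => ‖y‖) ((‖x‖⁻¹ : ℝ) • innerSL ℝ x) x := by
  have hq : HasFDerivAt (fun y : E2 => (inner ℝ y y : ℝ))
      ((fderivInnerCLM ℝ (x, x)).comp
        ((ContinuousLinearMap.id ℝ E2).prod (ContinuousLinearMap.id ℝ E2))) x :=
    (hasFDerivAt_id x).inner ℝ (hasFDerivAt_id x)
  have hxx : (inner ℝ x x : ℝ) = ‖x‖ ^ 2 := real_inner_self_eq_norm_sq x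
  have hqx : (inner ℝ x x : ℝ) ≠ 0 := by
    rw [hxx]; exact pow_ne_zero 2 (norm_ne_zero_iff.mpr hx)
  have hs : HasDerivAt Real.sqrt (1 / (2 * Real.sqrt (inner ℝ x x : ℝ))) (inner ℝ x x : ℝ) :=
    Real.hasDerivAt_sqrt hqx
  have h := hs.comp_hasFDerivAt (f := fun y : E2 => (inner ℝ y y : ℝ)) x hq
  have heq : (Real.sqrt ∘ fun y : E2 => (inner ℝ y y : ℝ)) = fun y : E2 => ‖y‖ := by
    funext y
    simp only [Function.comp_apply, real_inner_self_eq_norm_mul_norm]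
    exact Real.sqrt_mul_self (norm_nonneg y)
  rw [heq] at h
  refine h.congr_fderiv ?_
  ext v
  have hxp : (0:ℝ) < ‖x‖ := norm_pos_iff.mpr hx
  have hsq : Real.sqrt (inner ℝ x x : ℝ) = ‖x‖ := by
    rw [hxx, Real.sqrt_sq (norm_nonneg x)]
  simp only [ContinuousLinearMap.smul_apply, innerSL_apply_apply, smul_eq_mul,
    ContinuousLinearMap.coe_comp', Function.comp_apply, ContinuousLinearMap.prod_apply,
    ContinuousLinearMap.coe_id', id_eq, fderivInnerCLM_apply, hsq]
  rw [real_inner_comm v x]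
  field_simp
  ring

lemma hasFDerivAt_norm_rpowE2 {α : ℝ} {x : E2} (hx : x ≠ 0) :
    HasFDerivAt (fun y : E2 => ‖y‖ ^ α) ((α * ‖x‖ ^ (α - 1) * ‖x‖⁻¹) • innerSL ℝ x) x := by
  have h1 := Real.hasDerivAt_rpow_const (x := ‖x‖) (p := α) (Or.inl (norm_ne_zero_iff.mpr hx))
  have h2 := h1.comp_hasFDerivAt x (hasFDerivAt_normE2 hx)
  refine h2.congr_fderiv ?_
  rw [smul_smul]

lemma hasGradientAt_radial {f : ℝ → ℝ} {d α : ℝ} {x : E2} (hx : x ≠ 0)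
    (hf : HasDerivAt f d (‖x‖ ^ α)) :
    HasGradientAt (fun y : E2 => f (‖y‖ ^ α)) ((d * (α * ‖x‖ ^ (α - 1) * ‖x‖⁻¹)) • x) x := by
  have h := hf.comp_hasFDerivAt x (hasFDerivAt_norm_rpowE2 hx)
  rw [hasGradientAt_iff_hasFDerivAt]
  refine h.congr_fderiv ?_
  ext v
  simp only [InnerProductSpace.toDual_apply_apply, ContinuousLinearMap.smul_apply, innerSL_apply_apply,
    real_inner_smul_left, smul_eq_mul]
  ring

lemma hasFDerivAt_Tk {β : ℝ} {x : E2} (hx : x ≠ 0) :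
    HasFDerivAt (Tk β)
      (‖x‖ ^ (β - 1) • ContinuousLinearMap.id ℝ E2 +
        (((β - 1) * ‖x‖ ^ (β - 2) * ‖x‖⁻¹) • innerSL ℝ x).smulRight x) x := by
  have hc := hasFDerivAt_norm_rpowE2 (α := β - 1) hx
  have h := hc.smul (hasFDerivAt_id x)
  simp only [id_eq] at h
  rw [show β - 1 - 1 = β - 2 by ring] at h
  exact h

lemma det_aux {p q : ℝ} {x : E2} (hx : x ≠ 0) :
    (p • ContinuousLinearMap.id ℝ E2 + (q • innerSL ℝ x).smulRight x).det
      = p * (p + q * ‖x‖ ^ 2) := by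
  classical
  set L : E2 →L[ℝ] E2 := p • ContinuousLinearMap.id ℝ E2 + (q • innerSL ℝ x).smulRight x with hLdef
  set w : E2 := (WithLp.equiv 2 (Fin 2 → ℝ)).symm ![-x 1, x 0] with hwdef
  have hw0 : w 0 = -x 1 := rfl
  have hw1 : w 1 = x 0 := rfl
  have hxx : (inner ℝ x x : ℝ) = ‖x‖ ^ 2 := real_inner_self_eq_norm_sq x
  have hxw : (inner ℝ x w : ℝ) = 0 := by
    simp only [PiLp.inner_apply, RCLike.inner_apply, conj_trivial, Fin.sum_univ_two, hw0, hw1]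
    ring
  have hww : (inner ℝ w w : ℝ) = ‖x‖ ^ 2 := by
    have hxx' := hxx
    simp only [PiLp.inner_apply, RCLike.inner_apply, conj_trivial, Fin.sum_univ_two, hw0, hw1] at hxx' ⊢
    rw [← hxx']; ring
  have hx2 : ‖x‖ ^ 2 ≠ 0 := pow_ne_zero 2 (norm_ne_zero_iff.mpr hx)
  have hLx : L x = (p + q * ‖x‖ ^ 2) • x := by
    simp only [hLdef, ContinuousLinearMap.add_apply, ContinuousLinearMap.smul_apply,
      ContinuousLinearMap.coe_id', id_eq, ContinuousLinearMap.smulRight_apply, innerSL_apply_apply,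
      smul_eq_mul, hxx]
    rw [add_smul]
  have hLw : L w = p • w := by
    simp only [hLdef, ContinuousLinearMap.add_apply, ContinuousLinearMap.smul_apply,
      ContinuousLinearMap.coe_id', id_eq, ContinuousLinearMap.smulRight_apply, innerSL_apply_apply,
      smul_eq_mul, hxw]
    simp
  have li : LinearIndependent ℝ ![x, w] := by
    rw [LinearIndependent.pair_iff]
    intro s t hst
    have h1 : s * ‖x‖ ^ 2 = 0 := by
      have h := congrArg (fun z : E2 => (inner ℝ x z : ℝ)) hst
      simp only [inner_add_right, real_inner_smul_right, hxx, hxw, inner_zero_right,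
        mul_zero, add_zero] at h
      exact h
    have h2 : t * ‖x‖ ^ 2 = 0 := by
      have h := congrArg (fun z : E2 => (inner ℝ w z : ℝ)) hst
      simp only [inner_add_right, real_inner_smul_right, hww, inner_zero_right] at h
      have hwx : (inner ℝ w x : ℝ) = 0 := by rw [real_inner_comm]; exact hxw
      rw [hwx, mul_zero, zero_add] at h
      exact h
    constructor
    · exact by_contra fun hs => hx2 ((mul_eq_zero.mp h1).resolve_left hs)
    · exact by_contra fun ht => hx2 ((mul_eq_zero.mp h2).resolve_left ht)
  have card_eq : Fintype.card (Fin 2) = Module.finrank ℝ E2 := by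
    simp [finrank_euclideanSpace_fin]
  let b : Module.Basis (Fin 2) ℝ E2 := basisOfLinearIndependentOfCardEqFinrank li card_eq
  have hb0 : b 0 = x := by
    rw [show b = basisOfLinearIndependentOfCardEqFinrank li card_eq from rfl,
      coe_basisOfLinearIndependentOfCardEqFinrank]
    rfl
  have hb1 : b 1 = w := by
    rw [show b = basisOfLinearIndependentOfCardEqFinrank li card_eq from rfl,
      coe_basisOfLinearIndependentOfCardEqFinrank]
    rfl
  have hdet : L.det = (LinearMap.toMatrix b b (L : E2 →ₗ[ℝ] E2)).det := by
    rw [LinearMap.det_toMatrix]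
  rw [hdet, Matrix.det_fin_two]
  have e00 : LinearMap.toMatrix b b (L : E2 →ₗ[ℝ] E2) 0 0 = p + q * ‖x‖ ^ 2 := by
    rw [LinearMap.toMatrix_apply, ContinuousLinearMap.coe_coe, hb0, hLx, ← hb0]
    simp
  have e10 : LinearMap.toMatrix b b (L : E2 →ₗ[ℝ] E2) 1 0 = 0 := by
    rw [LinearMap.toMatrix_apply, ContinuousLinearMap.coe_coe, hb0, hLx, ← hb0]
    simp
  have e01 : LinearMap.toMatrix b b (L : E2 →ₗ[ℝ] E2) 0 1 = 0 := by
    rw [LinearMap.toMatrix_apply, ContinuousLinearMap.coe_coe, hb1, hLw, ← hb1]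
    simp
  have e11 : LinearMap.toMatrix b b (L : E2 →ₗ[ℝ] E2) 1 1 = p := by
    rw [LinearMap.toMatrix_apply, ContinuousLinearMap.coe_coe, hb1, hLw, ← hb1]
    simp
  rw [e00, e10, e01, e11]
  ring


noncomputable def e0 : E2 := EuclideanSpace.single 0 (1:ℝ)

lemma e0_norm : ‖e0‖ = 1 := by rw [e0, EuclideanSpace.norm_single, norm_one]

lemma annulus_open (c d : ℝ) : IsOpen {y : E2 | c < ‖y‖ ∧ ‖y‖ < d} :=
  (isOpen_lt continuous_const continuous_norm).inter
    (isOpen_lt continuous_norm continuous_const)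

lemma smul_e0_mem {c d t : ℝ} (hc0 : 0 ≤ c) (h1 : c < t) (h2 : t < d) :
    (t • e0 : E2) ∈ {y : E2 | c < ‖y‖ ∧ ‖y‖ < d} := by
  have ht : 0 ≤ t := hc0.trans h1.le
  constructor <;>
    simp only [Set.mem_setOf_eq, norm_smul, e0_norm, mul_one, Real.norm_eq_abs,
      abs_of_nonneg ht] <;> assumption

lemma radial_profile_deriv {ψ : E2 → ℝ} {c d t : ℝ} (hc0 : 0 ≤ c)
    (hψ : ContDiffOn ℝ 1 ψ {y : E2 | c < ‖y‖ ∧ ‖y‖ < d}) (h1 : c < t) (h2 : t < d) :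
    HasDerivAt (fun s : ℝ => ψ (s • e0)) (fderiv ℝ ψ (t • e0) e0) t := by
  have hmem := smul_e0_mem hc0 h1 h2
  have hdiff : DifferentiableAt ℝ ψ (t • e0) :=
    ((hψ.differentiableOn one_ne_zero) _ hmem).differentiableAt
      ((annulus_open c d).mem_nhds hmem)
  have hline : HasDerivAt (fun s : ℝ => s • e0) ((1:ℝ) • e0) t :=
    (hasDerivAt_id t).smul_const e0
  have h := hdiff.hasFDerivAt.comp_hasDerivAt t hline
  have h' : HasDerivAt (fun s : ℝ => ψ (s • e0)) (fderiv ℝ ψ (t • e0) ((1:ℝ) • e0)) t := h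
  simpa [Function.comp] using h'

lemma radial_eq_profile {ψ : E2 → ℝ} (hψ_rad : ∀ y y' : E2, ‖y‖ = ‖y'‖ → ψ y = ψ y')
    (y : E2) : ψ y = ψ (‖y‖ • e0) := by
  apply hψ_rad
  rw [norm_smul, e0_norm, mul_one, Real.norm_eq_abs, abs_of_nonneg (norm_nonneg y)]

lemma grad_radial_sq {ψ : E2 → ℝ} {c d : ℝ} (hc0 : 0 ≤ c)
    (hψ_rad : ∀ y y' : E2, ‖y‖ = ‖y'‖ → ψ y = ψ y')
    (hψ : ContDiffOn ℝ 1 ψ {y : E2 | c < ‖y‖ ∧ ‖y‖ < d}) {y : E2}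
    (h1 : c < ‖y‖) (h2 : ‖y‖ < d) :
    ‖gradient ψ y‖ ^ 2 = (fderiv ℝ ψ (‖y‖ • e0) e0) ^ 2 := by
  have hy0 : y ≠ 0 := by
    intro h0
    rw [h0, norm_zero] at h1
    linarith
  have hyn : (0:ℝ) < ‖y‖ := norm_pos_iff.mpr hy0
  have hf1 : HasDerivAt (fun s : ℝ => ψ (s • e0)) (fderiv ℝ ψ (‖y‖ • e0) e0) (‖y‖ ^ (1:ℝ)) := by
    rw [Real.rpow_one]; exact radial_profile_deriv hc0 hψ h1 h2
  have hg := hasGradientAt_radial hy0 hf1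
  have hfun : (fun z : E2 => ψ ((‖z‖ ^ (1:ℝ)) • e0)) = ψ := by
    funext z; rw [Real.rpow_one, ← radial_eq_profile hψ_rad]
  rw [hfun] at hg
  rw [hg.gradient, norm_smul, Real.norm_eq_abs, mul_pow, sq_abs,
    show (1:ℝ) - 1 = 0 by ring, Real.rpow_zero]
  field_simp

lemma grad_comp_sq {ψ : E2 → ℝ} {c d κ : ℝ} (hκ : 0 < κ) (hc0 : 0 ≤ c)
    (hψ_rad : ∀ y y' : E2, ‖y‖ = ‖y'‖ → ψ y = ψ y')
    (hψ : ContDiffOn ℝ 1 ψ {y : E2 | c < ‖y‖ ∧ ‖y‖ < d}) {x : E2} (hx : x ≠ 0)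
    (h1 : c < ‖x‖ ^ (1/κ)) (h2 : ‖x‖ ^ (1/κ) < d) :
    ‖gradient (ψ ∘ Tk (1/κ)) x‖ ^ 2
      = (fderiv ℝ ψ ((‖x‖ ^ (1/κ)) • e0) e0) ^ 2 * ((1/κ) * ‖x‖ ^ (1/κ - 1)) ^ 2 := by
  have hκ' : (0:ℝ) < 1/κ := by positivity
  have hxn : (0:ℝ) < ‖x‖ := norm_pos_iff.mpr hx
  have hf1 : HasDerivAt (fun s : ℝ => ψ (s • e0)) (fderiv ℝ ψ ((‖x‖ ^ (1/κ)) • e0) e0)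
      (‖x‖ ^ (1/κ)) := radial_profile_deriv hc0 hψ h1 h2
  have hg := hasGradientAt_radial hx hf1
  have hfun : (fun z : E2 => ψ ((‖z‖ ^ (1/κ)) • e0)) = ψ ∘ Tk (1/κ) := by
    funext z
    rw [Function.comp_apply, radial_eq_profile hψ_rad (Tk (1/κ) z), norm_Tk hκ']
  rw [hfun] at hg
  rw [hg.gradient, norm_smul, Real.norm_eq_abs, mul_pow, sq_abs]
  have hp : (0:ℝ) < ‖x‖ ^ (1/κ - 1) := Real.rpow_pos_of_pos hxn _
  field_simp

lemma det_L {κ : ℝ} {x : E2} (hκ : 0 < κ) (hx : x ≠ 0) :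
    (‖x‖ ^ (1/κ - 1) • ContinuousLinearMap.id ℝ E2 +
      (((1/κ - 1) * ‖x‖ ^ (1/κ - 2) * ‖x‖⁻¹) • innerSL ℝ x).smulRight x).det
      = (1/κ) * (‖x‖ ^ (1/κ - 1)) ^ 2 := by
  have hxn : (0:ℝ) < ‖x‖ := norm_pos_iff.mpr hx
  have h1 : ‖x‖ ^ (1/κ - 2) * ‖x‖ = ‖x‖ ^ (1/κ - 1) := by
    rw [← Real.rpow_add_one hxn.ne' (1/κ - 2)]
    congr 1
    ring
  rw [det_aux hx]
  have h2 : ((1/κ - 1) * ‖x‖ ^ (1/κ - 2) * ‖x‖⁻¹) * ‖x‖ ^ 2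
      = (1/κ - 1) * ‖x‖ ^ (1/κ - 1) := by
    rw [sq, ← h1]
    field_simp
  rw [h2]
  ring

lemma radial_desc {Ω : Set E2}
    (hΩ : (∃ R > 0, Ω = Metric.ball 0 R) ∨
      (∃ a b : ℝ, 0 < a ∧ a < b ∧ Ω = {x : E2 | a < ‖x‖ ∧ ‖x‖ < b}))
    {κ : ℝ} (hκ : 0 < κ) :
    ∃ c d : ℝ, 0 ≤ c ∧ c < d ∧ Ω \ {0} = {x : E2 | c ^ κ < ‖x‖ ∧ ‖x‖ < d ^ κ} := by
  have hκ' : (0:ℝ) < 1/κ := by positivity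
  rcases hΩ with ⟨R, hR, rfl⟩ | ⟨a, b, ha, hab, rfl⟩
  · refine ⟨0, R ^ (1/κ), le_rfl, Real.rpow_pos_of_pos hR _, ?_⟩
    have hRκ : (R ^ (1/κ)) ^ κ = R := by
      rw [← Real.rpow_mul hR.le, one_div_mul_cancel hκ.ne', Real.rpow_one]
    ext x
    simp only [Set.mem_diff, Metric.mem_ball, dist_zero_right, Set.mem_singleton_iff,
      Set.mem_setOf_eq, Real.zero_rpow hκ.ne', hRκ, norm_pos_iff]
    tauto
  · refine ⟨a ^ (1/κ), b ^ (1/κ), (Real.rpow_pos_of_pos ha _).le,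
      Real.rpow_lt_rpow ha.le hab hκ', ?_⟩
    have haκ : (a ^ (1/κ)) ^ κ = a := by
      rw [← Real.rpow_mul ha.le, one_div_mul_cancel hκ.ne', Real.rpow_one]
    have hbκ : (b ^ (1/κ)) ^ κ = b := by
      rw [← Real.rpow_mul (ha.trans hab).le, one_div_mul_cancel hκ.ne', Real.rpow_one]
    ext x
    simp only [Set.mem_diff, Set.mem_setOf_eq, Set.mem_singleton_iff, haκ, hbκ]
    constructor
    · exact fun h => h.1
    · intro h
      refine ⟨h, ?_⟩
      intro h0
      rw [h0, norm_zero] at h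
      linarith [h.1]

lemma preimage_desc {Ω : Set E2} {κ c d : ℝ} (hκ : 0 < κ) (hc0 : 0 ≤ c) (hcd : c < d)
    (hΩd : Ω \ {0} = {x : E2 | c ^ κ < ‖x‖ ∧ ‖x‖ < d ^ κ}) :
    (Tk κ ⁻¹' Ω) \ {0} = {y : E2 | c < ‖y‖ ∧ ‖y‖ < d} := by
  have hd0 : (0:ℝ) ≤ d := hc0.trans hcd.le
  ext y
  rcases eq_or_ne y 0 with rfl | hy
  · simp only [Set.mem_diff, Set.mem_singleton_iff, not_true_eq_false, and_false,
      Set.mem_setOf_eq, norm_zero, false_iff, not_and]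
    intro hc'
    linarith
  · have hy' : (0:ℝ) < ‖y‖ := norm_pos_iff.mpr hy
    have hTy : Tk κ y ≠ 0 := by
      rw [← norm_pos_iff, norm_Tk hκ]
      positivity
    have hmem : Tk κ y ∈ Ω ↔ (c ^ κ < ‖Tk κ y‖ ∧ ‖Tk κ y‖ < d ^ κ) := by
      constructor
      · intro h
        have hm : Tk κ y ∈ Ω \ {0} := ⟨h, hTy⟩
        rwa [hΩd] at hm
      · intro h
        have hm : Tk κ y ∈ Ω \ {0} := by rw [hΩd]; exact h
        exact hm.1
    simp only [Set.mem_diff, Set.mem_preimage, Set.mem_singleton_iff, hy,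
      not_false_eq_true, and_true, Set.mem_setOf_eq, hmem, norm_Tk hκ]
    rw [Real.rpow_lt_rpow_iff hc0 (norm_nonneg y) hκ,
      Real.rpow_lt_rpow_iff (norm_nonneg y) hd0 hκ]

lemma Tk_ne_zero {κ : ℝ} (hκ : 0 < κ) {y : E2} (hy : y ≠ 0) : Tk κ y ≠ 0 := by
  intro h0
  have h := norm_Tk hκ y
  rw [h0, norm_zero] at h
  exact absurd h.symm (ne_of_gt (Real.rpow_pos_of_pos (norm_pos_iff.mpr hy) _))

lemma Tk_inv_mem {Ω : Set E2} {κ : ℝ} (hκ : 0 < κ) {x : E2} (hx : x ∈ Ω \ {0}) :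
    Tk (1/κ) x ∈ (Tk κ ⁻¹' Ω) \ {0} := by
  have hκ' : (0:ℝ) < 1/κ := by positivity
  refine ⟨?_, Tk_ne_zero hκ' hx.2⟩
  rw [Set.mem_preimage, Tk_Tk' hκ]
  exact hx.1

lemma Tk_image_diff {Ω : Set E2} {κ : ℝ} (hκ : 0 < κ) :
    Tk (1/κ) '' (Ω \ {0}) = (Tk κ ⁻¹' Ω) \ {0} := by
  ext y
  constructor
  · rintro ⟨x, hx, rfl⟩
    exact Tk_inv_mem hκ hx
  · intro hy
    exact ⟨Tk κ y, ⟨hy.1, Tk_ne_zero hκ hy.2⟩, Tk_Tk hκ y⟩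

lemma Tk_injOn {κ : ℝ} (hκ : 0 < κ) : Set.InjOn (Tk (1/κ)) (Set.univ \ {0} : Set E2) := by
  intro x _ y _ hxy
  have h := congrArg (Tk κ) hxy
  rwa [Tk_Tk' hκ, Tk_Tk' hκ] at h

lemma pointwise_id {ψ : E2 → ℝ} {c d κ : ℝ} (hκ : 0 < κ) (hc0 : 0 ≤ c)
    (hψ_rad : ∀ y y' : E2, ‖y‖ = ‖y'‖ → ψ y = ψ y')
    (hψ : ContDiffOn ℝ 1 ψ {y : E2 | c < ‖y‖ ∧ ‖y‖ < d}) {x : E2} (hx0 : x ≠ 0)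
    (h1 : c < ‖x‖ ^ (1/κ)) (h2 : ‖x‖ ^ (1/κ) < d) :
    ENNReal.ofReal |(‖x‖ ^ (1/κ - 1) • ContinuousLinearMap.id ℝ E2 +
        (((1/κ - 1) * ‖x‖ ^ (1/κ - 2) * ‖x‖⁻¹) • innerSL ℝ x).smulRight x).det| *
      ENNReal.ofReal (‖gradient ψ (Tk (1/κ) x)‖ ^ 2)
      = ENNReal.ofReal κ * ENNReal.ofReal (‖gradient (ψ ∘ Tk (1/κ)) x‖ ^ 2) := by
  have hκ' : (0:ℝ) < 1/κ := by positivity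
  have hxn : (0:ℝ) < ‖x‖ := norm_pos_iff.mpr hx0
  have hgψ : ‖gradient ψ (Tk (1/κ) x)‖ ^ 2
      = (fderiv ℝ ψ ((‖x‖ ^ (1/κ)) • e0) e0) ^ 2 := by
    have h := grad_radial_sq hc0 hψ_rad hψ (y := Tk (1/κ) x)
      (by rwa [norm_Tk hκ']) (by rwa [norm_Tk hκ'])
    rwa [norm_Tk hκ'] at h
  have hgφ := grad_comp_sq hκ hc0 hψ_rad hψ hx0 h1 h2
  have hp : (0:ℝ) < ‖x‖ ^ (1/κ - 1) := Real.rpow_pos_of_pos hxn _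
  rw [det_L hκ hx0, abs_of_nonneg (by positivity : (0:ℝ) ≤ (1/κ) * (‖x‖ ^ (1/κ - 1)) ^ 2),
    hgψ, hgφ, ← ENNReal.ofReal_mul (by positivity), ← ENNReal.ofReal_mul hκ.le]
  congr 1
  field_simp

theorem Tk_gradient_integral_identity_radial
    (Ω : Set E2)
    (hΩ : (∃ R > 0, Ω = Metric.ball 0 R) ∨
      (∃ a b : ℝ, 0 < a ∧ a < b ∧ Ω = {x : E2 | a < ‖x‖ ∧ ‖x‖ < b}))
    (κ : ℝ) (hκ : 0 < κ)
    (ψ : E2 → ℝ) (hψ_rad : ∀ y y' : E2, ‖y‖ = ‖y'‖ → ψ y = ψ y')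
    (hψ : ContDiffOn ℝ 1 ψ ((Tk κ ⁻¹' Ω) \ {0}))
    (φ : E2 → ℝ) (hφ : φ = ψ ∘ Tk (1 / κ)) :
    ENNReal.ofReal κ * (∫⁻ x in Ω, ENNReal.ofReal (‖gradient φ x‖ ^ 2)) =
      ∫⁻ y in Tk κ ⁻¹' Ω, ENNReal.ofReal (‖gradient ψ y‖ ^ 2) := by
  subst hφ
  have hκ' : (0:ℝ) < 1/κ := by positivity
  obtain ⟨c, d, hc0, hcd, hΩd⟩ := radial_desc hΩ hκ
  have hU : (Tk κ ⁻¹' Ω) \ {0} = {y : E2 | c < ‖y‖ ∧ ‖y‖ < d} :=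
    preimage_desc hκ hc0 hcd hΩd
  rw [hU] at hψ
  have hVopen : IsOpen (Ω \ {0} : Set E2) := by rw [hΩd]; exact annulus_open _ _
  have hVmeas : MeasurableSet (Ω \ {0} : Set E2) := hVopen.measurableSet
  have hSderiv : ∀ x ∈ (Ω \ {0} : Set E2), HasFDerivWithinAt (Tk (1/κ))
      ((fun x : E2 => ‖x‖ ^ (1/κ - 1) • ContinuousLinearMap.id ℝ E2 +
        (((1/κ - 1) * ‖x‖ ^ (1/κ - 2) * ‖x‖⁻¹) • innerSL ℝ x).smulRight x) x)
      (Ω \ {0}) x := fun x hx =>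
    (hasFDerivAt_Tk hx.2).hasFDerivWithinAt
  have hSinj : Set.InjOn (Tk (1/κ)) (Ω \ {0} : Set E2) :=
    fun x hx y hy hxy => Tk_injOn hκ ⟨trivial, hx.2⟩ ⟨trivial, hy.2⟩ hxy
  have key := lintegral_image_eq_lintegral_abs_det_fderiv_mul (volume : Measure E2)
    hVmeas hSderiv hSinj (fun y => ENNReal.ofReal (‖gradient ψ y‖ ^ 2))
  rw [Tk_image_diff hκ, hU] at key
  have hpt : ∀ x ∈ (Ω \ {0} : Set E2),
      ENNReal.ofReal |((fun x : E2 => ‖x‖ ^ (1/κ - 1) • ContinuousLinearMap.id ℝ E2 +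
        (((1/κ - 1) * ‖x‖ ^ (1/κ - 2) * ‖x‖⁻¹) • innerSL ℝ x).smulRight x) x).det| *
        ENNReal.ofReal (‖gradient ψ (Tk (1/κ) x)‖ ^ 2)
        = ENNReal.ofReal κ * ENNReal.ofReal (‖gradient (ψ ∘ Tk (1/κ)) x‖ ^ 2) := by
    intro x hx
    have hm := Tk_inv_mem hκ hx
    rw [hU] at hm
    exact pointwise_id hκ hc0 hψ_rad hψ hx.2
      (by have := hm.1; rwa [norm_Tk hκ'] at this)
      (by have := hm.2; rwa [norm_Tk hκ'] at this)
  have h0 : volume ({(0:E2)} : Set E2) = 0 := measure_singleton 0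
  have hΩae : Ω =ᵐ[(volume : Measure E2)] (Ω \ {0} : Set E2) :=
    (MeasureTheory.diff_ae_eq_self.mpr (measure_mono_null Set.inter_subset_right h0)).symm
  have hAae : (Tk κ ⁻¹' Ω : Set E2) =ᵐ[(volume : Measure E2)]
      {y : E2 | c < ‖y‖ ∧ ‖y‖ < d} := by
    rw [← hU]
    exact (MeasureTheory.diff_ae_eq_self.mpr
      (measure_mono_null Set.inter_subset_right h0)).symm
  rw [setLIntegral_congr hΩae, setLIntegral_congr hAae, key,
    setLIntegral_congr_fun hVmeas hpt,
    lintegral_const_mul' _ _ ENNReal.ofReal_ne_top]
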